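/- Let a Grushin problem for P : H₁ → H₂ be well posed with inverse blocks E, E₊, E₋, E₋₊. Then ker P is finite dimensional if and only if ker E₋₊ is, the quotient H₂ / range P is finite dimensional if and only if H₋ / range E₋₊ is, and when all four spaces are finite dimensional, dim ker P = dim ker E₋₊, dim(H₂ / range P) = dim(H₋ / range E₋₊), and hence the indices agree: dim ker P − dim(H₂ / range P) = dim ker E₋₊ − dim(H₋ / range E₋₊) as integers. -/

import Mathlib

/-- For a well-posed Grushin problem with inverse blocks `E, E₊, E₋, E₋₊`:
`ker P` is finite dimensional iff `ker E₋₊` is; `H₂ / range P` is finite dimensional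
iff `H₋ / range E₋₊` is; and when all four are finite dimensional the dimensions of
kernels and cokernels agree, so the indices agree. -/
theorem stmt_9
    {H₁ H₂ Hm Hp : Type*}
    [NormedAddCommGroup H₁] [NormedSpace ℂ H₁] [CompleteSpace H₁]
    [NormedAddCommGroup H₂] [NormedSpace ℂ H₂] [CompleteSpace H₂]
    [NormedAddCommGroup Hm] [NormedSpace ℂ Hm] [CompleteSpace Hm]
    [NormedAddCommGroup Hp] [NormedSpace ℂ Hp] [CompleteSpace Hp]
    (P : H₁ →L[ℂ] H₂) (Rm : Hm →L[ℂ] H₂) (Rp : H₁ →L[ℂ] Hp)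
    (E : H₂ →L[ℂ] H₁) (Ep : Hp →L[ℂ] H₁) (Em : H₂ →L[ℂ] Hm) (Emp : Hp →L[ℂ] Hm)
    (hright : ∀ (v : H₂) (vp : Hp),
      P (E v + Ep vp) + Rm (Em v + Emp vp) = v ∧ Rp (E v + Ep vp) = vp)
    (hleft : ∀ (u : H₁) (um : Hm),
      E (P u + Rm um) + Ep (Rp u) = u ∧ Em (P u + Rm um) + Emp (Rp u) = um) :
    (FiniteDimensional ℂ (LinearMap.ker (P : H₁ →ₗ[ℂ] H₂)) ↔ FiniteDimensional ℂ (LinearMap.ker (Emp : Hp →ₗ[ℂ] Hm))) ∧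
    (FiniteDimensional ℂ (H₂ ⧸ LinearMap.range (P : H₁ →ₗ[ℂ] H₂)) ↔
      FiniteDimensional ℂ (Hm ⧸ LinearMap.range (Emp : Hp →ₗ[ℂ] Hm))) ∧
    (FiniteDimensional ℂ (LinearMap.ker (P : H₁ →ₗ[ℂ] H₂)) →
      FiniteDimensional ℂ (LinearMap.ker (Emp : Hp →ₗ[ℂ] Hm)) →
      FiniteDimensional ℂ (H₂ ⧸ LinearMap.range (P : H₁ →ₗ[ℂ] H₂)) →
      FiniteDimensional ℂ (Hm ⧸ LinearMap.range (Emp : Hp →ₗ[ℂ] Hm)) →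
      (Module.finrank ℂ (LinearMap.ker (P : H₁ →ₗ[ℂ] H₂)) = Module.finrank ℂ (LinearMap.ker (Emp : Hp →ₗ[ℂ] Hm)) ∧
       Module.finrank ℂ (H₂ ⧸ LinearMap.range (P : H₁ →ₗ[ℂ] H₂)) =
         Module.finrank ℂ (Hm ⧸ LinearMap.range (Emp : Hp →ₗ[ℂ] Hm)) ∧
       (Module.finrank ℂ (LinearMap.ker (P : H₁ →ₗ[ℂ] H₂)) : ℤ) -
         Module.finrank ℂ (H₂ ⧸ LinearMap.range (P : H₁ →ₗ[ℂ] H₂)) =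
       (Module.finrank ℂ (LinearMap.ker (Emp : Hp →ₗ[ℂ] Hm)) : ℤ) -
         Module.finrank ℂ (Hm ⧸ LinearMap.range (Emp : Hp →ₗ[ℂ] Hm)))) := by
  -- basic identities
  have h1 : ∀ u : H₁, E (P u) + Ep (Rp u) = u := by
    intro u; have := (hleft u 0).1; simpa using this
  have h2 : ∀ u : H₁, Em (P u) + Emp (Rp u) = 0 := by
    intro u; have := (hleft u 0).2; simpa using this
  have h5 : ∀ vp : Hp, P (Ep vp) + Rm (Emp vp) = 0 := by
    intro vp; have := (hright 0 vp).1; simpa using this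
  have h6 : ∀ vp : Hp, Rp (Ep vp) = vp := by
    intro vp; have := (hright 0 vp).2; simpa using this
  have h7 : ∀ v : H₂, P (E v) + Rm (Em v) = v := by
    intro v; have := (hright v 0).1; simpa using this
  -- kernel isomorphism
  have hf : ∀ u ∈ LinearMap.ker (P : H₁ →ₗ[ℂ] H₂), Rp u ∈ LinearMap.ker (Emp : Hp →ₗ[ℂ] Hm) := by
    intro u hu
    have hu' : P u = 0 := hu
    have := h2 u
    simp [hu'] at this
    simpa [LinearMap.mem_ker] using this
  have hg : ∀ vp ∈ LinearMap.ker (Emp : Hp →ₗ[ℂ] Hm), Ep vp ∈ LinearMap.ker (P : H₁ →ₗ[ℂ] H₂) := by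
    intro vp hvp
    have hv' : Emp vp = 0 := hvp
    have := h5 vp
    simp [hv'] at this
    simpa [LinearMap.mem_ker] using this
  let f : LinearMap.ker (P : H₁ →ₗ[ℂ] H₂) →ₗ[ℂ] LinearMap.ker (Emp : Hp →ₗ[ℂ] Hm) :=
    (Rp : H₁ →ₗ[ℂ] Hp).restrict hf
  let g : LinearMap.ker (Emp : Hp →ₗ[ℂ] Hm) →ₗ[ℂ] LinearMap.ker (P : H₁ →ₗ[ℂ] H₂) :=
    (Ep : Hp →ₗ[ℂ] H₁).restrict hg
  have eker : (LinearMap.ker (P : H₁ →ₗ[ℂ] H₂)) ≃ₗ[ℂ] (LinearMap.ker (Emp : Hp →ₗ[ℂ] Hm)) := by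
    refine LinearEquiv.ofLinear f g ?_ ?_
    · ext ⟨vp, hvp⟩
      simp only [LinearMap.coe_comp, Function.comp_apply, LinearMap.id_coe, id_eq, f, g,
        LinearMap.restrict_apply]
      exact h6 vp
    · ext ⟨u, hu⟩
      simp only [LinearMap.coe_comp, Function.comp_apply, LinearMap.id_coe, id_eq, f, g,
        LinearMap.restrict_apply]
      have hu' : P u = 0 := hu
      have := h1 u
      simpa [hu'] using this
  -- cokernel isomorphism
  have hφ : LinearMap.range (P : H₁ →ₗ[ℂ] H₂) ≤ LinearMap.ker
      ((LinearMap.range (Emp : Hp →ₗ[ℂ] Hm)).mkQ.comp (Em : H₂ →ₗ[ℂ] Hm)) := by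
    rintro _ ⟨u, rfl⟩
    have : Em (P u) = Emp (-Rp u) := by
      rw [map_neg, eq_neg_iff_add_eq_zero]
      exact h2 u
    simp only [LinearMap.mem_ker, LinearMap.coe_comp, Function.comp_apply,
      ContinuousLinearMap.coe_coe, Submodule.mkQ_apply, Submodule.Quotient.mk_eq_zero]
    exact ⟨-Rp u, this.symm⟩
  have hψ : LinearMap.range (Emp : Hp →ₗ[ℂ] Hm) ≤ LinearMap.ker
      ((LinearMap.range (P : H₁ →ₗ[ℂ] H₂)).mkQ.comp (Rm : Hm →ₗ[ℂ] H₂)) := by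
    rintro _ ⟨vp, rfl⟩
    have : P (-Ep vp) = Rm (Emp vp) := by
      rw [map_neg, neg_eq_iff_add_eq_zero]
      exact h5 vp
    simp only [LinearMap.mem_ker, LinearMap.coe_comp, Function.comp_apply,
      ContinuousLinearMap.coe_coe, Submodule.mkQ_apply, Submodule.Quotient.mk_eq_zero]
    exact ⟨-Ep vp, this⟩
  let φ := Submodule.liftQ (LinearMap.range (P : H₁ →ₗ[ℂ] H₂))
    ((LinearMap.range (Emp : Hp →ₗ[ℂ] Hm)).mkQ.comp (Em : H₂ →ₗ[ℂ] Hm)) hφ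
  let ψ := Submodule.liftQ (LinearMap.range (Emp : Hp →ₗ[ℂ] Hm))
    ((LinearMap.range (P : H₁ →ₗ[ℂ] H₂)).mkQ.comp (Rm : Hm →ₗ[ℂ] H₂)) hψ
  have ecoker : (H₂ ⧸ LinearMap.range (P : H₁ →ₗ[ℂ] H₂)) ≃ₗ[ℂ] (Hm ⧸ LinearMap.range (Emp : Hp →ₗ[ℂ] Hm)) := by
    refine LinearEquiv.ofLinear φ ψ ?_ ?_
    · refine Submodule.linearMap_qext _ ?_
      ext um
      simp only [LinearMap.coe_comp, Function.comp_apply, Submodule.mkQ_apply,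
        LinearMap.id_coe, id_eq, φ, ψ, Submodule.liftQ_apply, ContinuousLinearMap.coe_coe]
      have h4 : Em (Rm um) = um := by
        have := (hleft 0 um).2; simpa using this
      rw [h4]
    · refine Submodule.linearMap_qext _ ?_
      ext v
      simp only [LinearMap.coe_comp, Function.comp_apply, Submodule.mkQ_apply,
        LinearMap.id_coe, id_eq, φ, ψ, Submodule.liftQ_apply, ContinuousLinearMap.coe_coe]
      rw [Submodule.Quotient.eq]
      refine ⟨-E v, ?_⟩
      rw [map_neg, neg_eq_iff_add_eq_zero, add_sub_assoc', add_comm, sub_eq_zero, add_comm]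
      exact h7 v
  refine ⟨⟨fun h => Module.Finite.equiv eker, fun h => Module.Finite.equiv eker.symm⟩,
    ⟨fun h => Module.Finite.equiv ecoker, fun h => Module.Finite.equiv ecoker.symm⟩,
    fun _ _ _ _ => ?_⟩
  have e1 := eker.finrank_eq
  have e2 := ecoker.finrank_eq
  exact ⟨e1, e2, by rw [e1, e2]⟩
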